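/- Relation between arc-length growth and gradient growth (Lemma 4.4): Under the transport setup with θ of class C², fix t₀ ≤ t and let γ : [0, l₀] → ℝ² be a C¹ curve with γ′(β) = ξ(γ(β), t₀) for all β (a level-set segment of θ(·, t₀) of arc length l₀). Assume ∇^⊥θ(γ(β), t₀) ≠ 0 and ∇^⊥θ(X(γ(β), t₀, t), t) ≠ 0 for all β ∈ [0, l₀]. Define l(t) = ∫₀^{l₀} ‖∂_β X(γ(β), t₀, t)‖ dβ (the arc length of the transported segment), Ω_l(t₀) = max_{β} ‖∇^⊥θ(γ(β), t₀)‖, Ω_l(t) = max_{β} ‖∇^⊥θ(X(γ(β), t₀, t), t)‖, m(t₀) = max_{β} |(∇·ξ)(γ(β), t₀)|, and m(t) = max_{β} |(∇·ξ)(X(γ(β), t₀, t), t)|. Then e^{−m(t)·l(t)} · Ω_l(t)/Ω_l(t₀) ≤ l(t)/l₀ ≤ e^{m(t₀)·l₀} · Ω_l(t)/Ω_l(t₀). -/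

import Mathlib

noncomputable section
open Real

/-- The plane, with its Euclidean structure. -/
abbrev E2 := EuclideanSpace ℝ (Fin 2)

/-- `v^⊥ = (-v₂, v₁)`. -/
def perp (v : E2) : E2 := (WithLp.equiv 2 (Fin 2 → ℝ)).symm ![-(v 1), v 0]

/-- The perpendicular spatial gradient `∇^⊥θ(x,t) = (-∂θ/∂x₂, ∂θ/∂x₁)`. -/
def perpGrad (θ : E2 → ℝ → ℝ) (t : ℝ) (x : E2) : E2 :=
  perp (gradient (fun y => θ y t) x)

/-- The unit direction field `ξ = ∇^⊥θ / ‖∇^⊥θ‖` (where `∇^⊥θ ≠ 0`). -/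
def xi (θ : E2 → ℝ → ℝ) (t : ℝ) (x : E2) : E2 :=
  ‖perpGrad θ t x‖⁻¹ • perpGrad θ t x

/-- The divergence `∇·ξ` of the direction field at time `t`. -/
def divXi (θ : E2 → ℝ → ℝ) (t : ℝ) (x : E2) : ℝ :=
  ∑ i : Fin 2, (fderiv ℝ (fun y => xi θ t y) x (EuclideanSpace.single i 1)) i

lemma perp_apply0 (v : E2) : perp v 0 = -(v 1) := rfl
lemma perp_apply1 (v : E2) : perp v 1 = v 0 := rfl
lemma inner_E2 (x y : E2) : (inner ℝ x y : ℝ) = x 0 * y 0 + x 1 * y 1 := by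
  simp [EuclideanSpace.inner_eq_star_dotProduct]
  ring

lemma perp_add (v w : E2) : perp (v + w) = perp v + perp w := by
  ext i; fin_cases i <;> simp [perp] <;> ring

lemma perp_smul (c : ℝ) (v : E2) : perp (c • v) = c • perp v := by
  ext i; fin_cases i <;> simp [perp] <;> ring

lemma perp_perp (v : E2) : perp (perp v) = -v := by
  ext i; fin_cases i <;> simp [perp]

def perpL : E2 →L[ℝ] E2 :=
  LinearMap.toContinuousLinearMap
    { toFun := perp, map_add' := perp_add, map_smul' := perp_smul }

lemma perpL_apply (v : E2) : perpL v = perp v := rfl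

-- det formula for a 2x2 CLM
lemma det_fin_two_clm (A : E2 →L[ℝ] E2) :
    A.det = A (EuclideanSpace.single 0 1) 0 * A (EuclideanSpace.single 1 1) 1
      - A (EuclideanSpace.single 0 1) 1 * A (EuclideanSpace.single 1 1) 0 := by
  have b := (EuclideanSpace.basisFun (Fin 2) ℝ).toBasis
  rw [ContinuousLinearMap.det, ← LinearMap.det_toMatrix (EuclideanSpace.basisFun (Fin 2) ℝ).toBasis,
    Matrix.det_fin_two]
  simp [LinearMap.toMatrix_apply, EuclideanSpace.basisFun_apply]
  ring

-- bilinear invariance under det-1 maps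
lemma inner_perp_map (A : E2 →L[ℝ] E2) (hA : A.det = 1) (a b : E2) :
    (inner ℝ (perp (A a)) (A b) : ℝ) = inner ℝ (perp a) b := by
  have ha : A a = a 0 • A (EuclideanSpace.single 0 1) + a 1 • A (EuclideanSpace.single 1 1) := by
    rw [← map_smul, ← map_smul, ← map_add]
    congr 1
    ext i; fin_cases i <;> simp
  have hb : A b = b 0 • A (EuclideanSpace.single 0 1) + b 1 • A (EuclideanSpace.single 1 1) := by
    rw [← map_smul, ← map_smul, ← map_add]
    congr 1
    ext i; fin_cases i <;> simp
  have hd := det_fin_two_clm A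
  rw [hA] at hd
  rw [inner_E2, inner_E2, ha, hb, perp_apply0, perp_apply1, perp_apply0, perp_apply1]
  simp only [PiLp.add_apply, PiLp.smul_apply, smul_eq_mul]
  linear_combination (a 1 * b 0 - a 0 * b 1) * hd

lemma surjective_of_det_one (A : E2 →L[ℝ] E2) (hA : A.det = 1) : Function.Surjective A := by
  have h1 : LinearMap.det (A : E2 →ₗ[ℝ] E2) ≠ 0 := by
    rw [ContinuousLinearMap.det] at hA; rw [hA]; norm_num
  intro y
  refine ⟨(LinearMap.equivOfDetNeZero (A : E2 →ₗ[ℝ] E2) h1).symm y, ?_⟩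
  have h2 : ∀ z : E2, A z = (LinearMap.equivOfDetNeZero (A : E2 →ₗ[ℝ] E2) h1) z :=
    fun z => (LinearEquiv.ofIsUnitDet_apply _ _).symm
  rw [h2, LinearEquiv.apply_symm_apply]

lemma map_perp_of_rel (A : E2 →L[ℝ] E2) (hA : A.det = 1) (g₀ gt : E2)
    (hrel : ∀ v : E2, (inner ℝ gt (A v) : ℝ) = inner ℝ g₀ v) :
    A (perp g₀) = perp gt := by
  have key : ∀ v : E2, (inner ℝ (perp (A (perp g₀))) (A v) : ℝ) = inner ℝ (perp (perp gt)) (A v) := by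
    intro v
    rw [inner_perp_map A hA, perp_perp, perp_perp, inner_neg_left, ← hrel v]
    rw [inner_neg_left]
  have h2 : perp (A (perp g₀)) = perp (perp gt) := by
    apply ext_inner_right ℝ
    intro w
    obtain ⟨v, rfl⟩ := surjective_of_det_one A hA w
    exact key v
  have := congrArg perp h2
  rw [perp_perp, perp_perp] at this
  exact neg_injective this


lemma coord_eq_inner (x : E2) (i : Fin 2) :
    x i = (inner ℝ x (EuclideanSpace.single i (1:ℝ)) : ℝ) := by
  fin_cases i <;> simp [inner_E2]

lemma sum_coord_smul (x : E2) :
    x 0 • EuclideanSpace.single 0 (1:ℝ) + x 1 • EuclideanSpace.single 1 (1:ℝ) = x := by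
  ext i; fin_cases i <;> simp

lemma perpGrad_eq (θ : E2 → ℝ → ℝ) (r : ℝ) :
    perpGrad θ r = fun x => perpL ((InnerProductSpace.toDual ℝ E2).symm
      (fderiv ℝ (fun y => θ y r) x)) := rfl

lemma perpGrad_contDiff (θ : E2 → ℝ → ℝ) (r : ℝ) (hθr : ContDiff ℝ 2 (fun y => θ y r)) :
    ContDiff ℝ 1 (perpGrad θ r) := by
  rw [perpGrad_eq]
  exact perpL.contDiff.comp
    (((InnerProductSpace.toDual ℝ E2).symm.contDiff).comp
      (hθr.fderiv_right (by norm_num)))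

lemma gradient_coord (f : E2 → ℝ) (y : E2) (i : Fin 2) :
    gradient f y i = fderiv ℝ f y (EuclideanSpace.single i 1) := by
  rw [coord_eq_inner (gradient f y) i]
  exact InnerProductSpace.toDual_symm_apply

lemma fderiv_coord (W : E2 → E2) (x : E2) (hW : DifferentiableAt ℝ W x) (v : E2) (i : Fin 2) :
    fderiv ℝ (fun y => W y i) x v = (fderiv ℝ W x v) i := by
  have h := ((EuclideanSpace.proj i : E2 →L[ℝ] ℝ).hasFDerivAt.comp x hW.hasFDerivAt).fderiv
  have h2 : (fun y => W y i) = (⇑(EuclideanSpace.proj i : E2 →L[ℝ] ℝ)) ∘ W := rfl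
  rw [h2, h]
  rfl

lemma div_perpGrad_zero (θ : E2 → ℝ → ℝ) (r : ℝ) (hθr : ContDiff ℝ 2 (fun y => θ y r)) (x : E2) :
    (fderiv ℝ (perpGrad θ r) x (EuclideanSpace.single 0 1)) 0
      + (fderiv ℝ (perpGrad θ r) x (EuclideanSpace.single 1 1)) 1 = 0 := by
  set f : E2 → ℝ := fun y => θ y r with hf
  have hdf : ContDiff ℝ 1 (fderiv ℝ f) := hθr.fderiv_right (by norm_num)
  have hdfd : DifferentiableAt ℝ (fderiv ℝ f) x := hdf.differentiable one_ne_zero x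
  set F2 := fderiv ℝ (fderiv ℝ f) x with hF2
  have hsymm : ∀ v w : E2, F2 v (w) = F2 w v := fun v w =>
    second_derivative_symmetric
      (fun y => ((hθr.differentiable (by norm_num)) y).hasFDerivAt)
      hdfd.hasFDerivAt v w
  have hWd : DifferentiableAt ℝ (perpGrad θ r) x :=
    (perpGrad_contDiff θ r hθr).differentiable one_ne_zero x
  have heval : ∀ i : Fin 2, fderiv ℝ (fun y => fderiv ℝ f y (EuclideanSpace.single i 1)) x
      = (ContinuousLinearMap.apply ℝ ℝ (EuclideanSpace.single i (1:ℝ))).comp F2 := by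
    intro i
    exact ((ContinuousLinearMap.apply ℝ ℝ
      (EuclideanSpace.single i (1:ℝ))).hasFDerivAt.comp x hdfd.hasFDerivAt).fderiv
  have hW0 : (fun y => perpGrad θ r y 0) = fun y => -(fderiv ℝ f y (EuclideanSpace.single 1 1)) := by
    funext y
    rw [show perpGrad θ r y 0 = -(gradient f y 1) from rfl, gradient_coord]
  have hW1 : (fun y => perpGrad θ r y 1) = fun y => fderiv ℝ f y (EuclideanSpace.single 0 1) := by
    funext y
    rw [show perpGrad θ r y 1 = gradient f y 0 from rfl, gradient_coord]
  have h0 : (fderiv ℝ (perpGrad θ r) x (EuclideanSpace.single 0 1)) 0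
      = -(F2 (EuclideanSpace.single 0 1) (EuclideanSpace.single 1 1)) := by
    rw [← fderiv_coord _ _ hWd, hW0, fderiv_fun_neg, heval 1]
    rfl
  have h1 : (fderiv ℝ (perpGrad θ r) x (EuclideanSpace.single 1 1)) 1
      = F2 (EuclideanSpace.single 1 1) (EuclideanSpace.single 0 1) := by
    rw [← fderiv_coord _ _ hWd, hW1, heval 0]
    rfl
  rw [h0, h1, hsymm]
  ring

lemma divXi_formula (θ : E2 → ℝ → ℝ) (r : ℝ) (hθr : ContDiff ℝ 2 (fun y => θ y r)) (x : E2)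
    (hx : perpGrad θ r x ≠ 0) :
    divXi θ r x = -(‖perpGrad θ r x‖^3)⁻¹ *
      (inner ℝ (fderiv ℝ (perpGrad θ r) x (perpGrad θ r x)) (perpGrad θ r x) : ℝ) := by
  set w := perpGrad θ r with hw
  set D := fderiv ℝ w x with hD
  have hWf : HasFDerivAt w D x :=
    ((perpGrad_contDiff θ r hθr).differentiable one_ne_zero x).hasFDerivAt
  have hn : ‖w x‖ ≠ 0 := norm_ne_zero_iff.mpr hx
  have hρ : HasFDerivAt (fun y => (inner ℝ (w y) (w y) : ℝ))
      ((fderivInnerCLM ℝ (w x, w x)).comp (D.prod D)) x := hWf.inner ℝ hWf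
  have hρval : ∀ h : E2, ((fderivInnerCLM ℝ (w x, w x)).comp (D.prod D)) h
      = 2 * (inner ℝ (D h) (w x) : ℝ) := by
    intro h
    simp [fderivInnerCLM_apply, real_inner_comm]
    ring
  have hρx : (inner ℝ (w x) (w x) : ℝ) ≠ 0 := by
    rw [real_inner_self_eq_norm_sq]
    positivity
  have hsq0 : HasFDerivAt (fun y => Real.sqrt (inner ℝ (w y) (w y) : ℝ))
      ((1 / (2 * Real.sqrt (inner ℝ (w x) (w x) : ℝ))) •
        ((fderivInnerCLM ℝ (w x, w x)).comp (D.prod D))) x := hρ.sqrt hρx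
  have hnormfun : (fun y => Real.sqrt (inner ℝ (w y) (w y) : ℝ)) = fun y => ‖w y‖ := by
    funext y
    rw [real_inner_self_eq_norm_sq, Real.sqrt_sq (norm_nonneg _)]
  have hsqval : Real.sqrt (inner ℝ (w x) (w x) : ℝ) = ‖w x‖ := by
    rw [real_inner_self_eq_norm_sq, Real.sqrt_sq (norm_nonneg _)]
  rw [hnormfun] at hsq0
  have hinv : HasFDerivAt (fun y => ‖w y‖⁻¹)
      ((-(‖w x‖ ^ 2)⁻¹) • ((1 / (2 * Real.sqrt (inner ℝ (w x) (w x) : ℝ))) •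
        ((fderivInnerCLM ℝ (w x, w x)).comp (D.prod D)))) x :=
    (hasDerivAt_inv hn).comp_hasFDerivAt x hsq0
  have hxi : HasFDerivAt (xi θ r)
      (‖w x‖⁻¹ • D + ((-(‖w x‖ ^ 2)⁻¹) • ((1 / (2 * Real.sqrt (inner ℝ (w x) (w x) : ℝ))) •
        ((fderivInnerCLM ℝ (w x, w x)).comp (D.prod D)))).smulRight (w x)) x := by
    exact hinv.smul hWf
  have hfd : fderiv ℝ (fun y => xi θ r y) x = _ := hxi.fderiv
  rw [divXi, hfd]
  rw [Fin.sum_univ_two]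
  simp only [ContinuousLinearMap.add_apply, ContinuousLinearMap.smul_apply,
    ContinuousLinearMap.smulRight_apply, PiLp.add_apply, PiLp.smul_apply, smul_eq_mul, hρval,
    hsqval]
  have hdiv := div_perpGrad_zero θ r hθr x
  have hsum : (inner ℝ (D (EuclideanSpace.single 0 1)) (w x) : ℝ) * (w x 0)
      + (inner ℝ (D (EuclideanSpace.single 1 1)) (w x) : ℝ) * (w x 1)
      = (inner ℝ (D (w x)) (w x) : ℝ) := by
    rw [← sum_coord_smul (w x), map_add, map_smul, map_smul, inner_add_left,
      real_inner_smul_left, real_inner_smul_left]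
    rw [sum_coord_smul]
    ring
  rw [← hw, ← hD] at *
  have expand : ‖w x‖⁻¹ * (D (EuclideanSpace.single 0 1)) 0
      + (-(‖w x‖^2)⁻¹ * ((1/(2*‖w x‖)) * (2 * (inner ℝ (D (EuclideanSpace.single 0 1)) (w x) : ℝ)))) * (w x 0)
      + (‖w x‖⁻¹ * (D (EuclideanSpace.single 1 1)) 1
      + (-(‖w x‖^2)⁻¹ * ((1/(2*‖w x‖)) * (2 * (inner ℝ (D (EuclideanSpace.single 1 1)) (w x) : ℝ)))) * (w x 1))
      = -(‖w x‖^3)⁻¹ * (inner ℝ (D (w x)) (w x) : ℝ) := by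
    rw [← hsum]
    field_simp
    linear_combination (‖w x‖^2) * hdiv
  convert expand using 2 <;> ring

lemma hasDerivAt_log_norm_perpGrad (θ : E2 → ℝ → ℝ) (r : ℝ)
    (hθr : ContDiff ℝ 2 (fun y => θ y r)) (c : ℝ → E2) (β k : ℝ)
    (hc : HasDerivAt c (k • perpGrad θ r (c β)) β) (hx : perpGrad θ r (c β) ≠ 0) :
    HasDerivAt (fun b => Real.log ‖perpGrad θ r (c b)‖)
      (-(divXi θ r (c β)) * (k * ‖perpGrad θ r (c β)‖)) β := by
  set w := perpGrad θ r with hw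
  set D := fderiv ℝ w (c β) with hD
  have hn : ‖w (c β)‖ ≠ 0 := norm_ne_zero_iff.mpr hx
  have hWf : HasFDerivAt w D (c β) :=
    ((perpGrad_contDiff θ r hθr).differentiable one_ne_zero (c β)).hasFDerivAt
  have hW : HasDerivAt (fun b => w (c b)) (k • D (w (c β))) β := by
    have := hWf.comp_hasDerivAt β hc
    rwa [map_smul] at this
  have hρ : HasDerivAt (fun b => (inner ℝ (w (c b)) (w (c b)) : ℝ))
      ((inner ℝ (w (c β)) (k • D (w (c β))) : ℝ) + (inner ℝ (k • D (w (c β))) (w (c β)) : ℝ)) β :=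
    hW.inner ℝ hW
  have hρval : (inner ℝ (w (c β)) (k • D (w (c β))) : ℝ) + (inner ℝ (k • D (w (c β))) (w (c β)) : ℝ)
      = 2 * k * (inner ℝ (D (w (c β))) (w (c β)) : ℝ) := by
    rw [real_inner_smul_left, real_inner_smul_right, real_inner_comm]
    ring
  rw [hρval] at hρ
  have hρx : (inner ℝ (w (c β)) (w (c β)) : ℝ) ≠ 0 := by
    rw [real_inner_self_eq_norm_sq]; positivity
  have hsq : HasDerivAt (fun b => Real.sqrt (inner ℝ (w (c b)) (w (c b)) : ℝ))
      (1 / (2 * Real.sqrt (inner ℝ (w (c β)) (w (c β)) : ℝ))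
        * (2 * k * (inner ℝ (D (w (c β))) (w (c β)) : ℝ))) β :=
    (Real.hasDerivAt_sqrt hρx).comp β hρ
  have hnormfun : (fun b => Real.sqrt (inner ℝ (w (c b)) (w (c b)) : ℝ))
      = fun b => ‖w (c b)‖ := by
    funext b; rw [real_inner_self_eq_norm_sq, Real.sqrt_sq (norm_nonneg _)]
  have hsqval : Real.sqrt (inner ℝ (w (c β)) (w (c β)) : ℝ) = ‖w (c β)‖ := by
    rw [real_inner_self_eq_norm_sq, Real.sqrt_sq (norm_nonneg _)]
  rw [hnormfun, hsqval] at hsq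
  have hlog : HasDerivAt (fun b => Real.log ‖w (c b)‖)
      (‖w (c β)‖⁻¹ * (1 / (2 * ‖w (c β)‖) * (2 * k * (inner ℝ (D (w (c β))) (w (c β)) : ℝ)))) β :=
    by have := (Real.hasDerivAt_log hn).comp β hsq; exact this
  convert hlog using 1
  have hii : (inner ℝ (D (w (c β))) (w (c β)) : ℝ) = -divXi θ r (c β) * ‖w (c β)‖^3 := by
    rw [divXi_formula θ r hθr (c β) hx]
    rw [← hw, ← hD]
    field_simp
  rw [hii]
  field_simp

section transport
variable (u : E2 → ℝ → E2) (θ : E2 → ℝ → ℝ) (X : E2 → ℝ → ℝ → E2)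

lemma theta_slice (hθ : ContDiff ℝ 2 (fun p : E2 × ℝ => θ p.1 p.2)) (r : ℝ) :
    ContDiff ℝ 2 (fun y => θ y r) :=
  hθ.comp (contDiff_id.prodMk contDiff_const)

lemma theta_flow_const
    (hθ : ContDiff ℝ 2 (fun p : E2 × ℝ => θ p.1 p.2))
    (htrans : ∀ x : E2, ∀ t : ℝ,
      HasDerivAt (fun s => θ x s) (-(fderiv ℝ (fun y => θ y t) x (u x t))) t)
    (hflow : ∀ α : E2, ∀ τ t : ℝ, HasDerivAt (fun s => X α τ s) (u (X α τ t) t) t)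
    (hinit : ∀ α : E2, ∀ τ : ℝ, X α τ τ = α) (α : E2) (t₀ t : ℝ) :
    θ (X α t₀ t) t = θ α t₀ := by
  set F : E2 × ℝ → ℝ := fun p => θ p.1 p.2 with hF
  have hFd : ∀ p : E2 × ℝ, HasFDerivAt F (fderiv ℝ F p) p :=
    fun p => ((hθ.differentiable (by norm_num)) p).hasFDerivAt
  set g : ℝ → ℝ := fun s => θ (X α t₀ s) s with hg
  have hgd : ∀ s : ℝ, HasDerivAt g 0 s := by
    intro s
    set x := X α t₀ s with hx
    have hc : HasDerivAt (fun s' => (X α t₀ s', s')) ((u x s, 1)) s :=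
      (hflow α t₀ s).prodMk (hasDerivAt_id s)
    have hcomp := HasFDerivAt.comp_hasDerivAt (f := fun s' => (X α t₀ s', s')) s (hFd (x, s)) hc
    -- spatial partial
    have h1 : ∀ v : E2, fderiv ℝ F (x, s) (v, 0) = fderiv ℝ (fun y => θ y s) x v := by
      intro v
      have hsp : HasFDerivAt (fun y : E2 => θ y s)
          ((fderiv ℝ F (x, s)).comp (ContinuousLinearMap.inl ℝ E2 ℝ)) x :=
        HasFDerivAt.comp (f := fun e : E2 => (e, s)) x (hFd (x, s)) (hasFDerivAt_prodMk_left x s)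
      rw [hsp.fderiv]
      rfl
    -- time partial
    have h2 : fderiv ℝ F (x, s) (0, 1) = -(fderiv ℝ (fun y => θ y s) x (u x s)) := by
      have htp : HasDerivAt (fun τ => θ x τ) (fderiv ℝ F (x, s) (0, 1)) s := by
        have hcv : HasDerivAt (fun τ : ℝ => ((x, τ) : E2 × ℝ)) ((0, 1)) s :=
          (hasDerivAt_const s x).prodMk (hasDerivAt_id s)
        exact (hFd (x, s)).comp_hasDerivAt s hcv
      exact htp.unique (htrans x s)
    have hdecomp : ((u x s, 1) : E2 × ℝ) = (u x s, 0) + (0, 1) := by simp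
    rw [hdecomp, map_add, h1, h2, add_neg_cancel] at hcomp
    exact hcomp
  have hconst : g t = g t₀ :=
    is_const_of_deriv_eq_zero (fun s => (hgd s).differentiableAt)
      (fun s => (hgd s).deriv) t t₀
  simpa [hg, hinit α t₀] using hconst

lemma perpGrad_transport
    (hθ : ContDiff ℝ 2 (fun p : E2 × ℝ => θ p.1 p.2))
    (htrans : ∀ x : E2, ∀ t : ℝ,
      HasDerivAt (fun s => θ x s) (-(fderiv ℝ (fun y => θ y t) x (u x t))) t)
    (hflow : ∀ α : E2, ∀ τ t : ℝ, HasDerivAt (fun s => X α τ s) (u (X α τ t) t) t)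
    (hinit : ∀ α : E2, ∀ τ : ℝ, X α τ τ = α)
    (hXC1 : ∀ τ t : ℝ, ContDiff ℝ 1 (fun α => X α τ t))
    (hdet : ∀ α : E2, ∀ τ t : ℝ, (fderiv ℝ (fun a => X a τ t) α).det = 1)
    (t₀ t : ℝ) (α : E2) :
    perpGrad θ t (X α t₀ t) = fderiv ℝ (fun a => X a t₀ t) α (perpGrad θ t₀ α) := by
  set A := fderiv ℝ (fun a => X a t₀ t) α with hA
  have hAd : HasFDerivAt (fun a => X a t₀ t) A α :=
    (((hXC1 t₀ t).differentiable one_ne_zero) α).hasFDerivAt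
  have hθt := theta_slice θ hθ t
  have hθt₀ := theta_slice θ hθ t₀
  -- equality of functions of α
  have hfun : (fun a => θ (X a t₀ t) t) = fun a => θ a t₀ := by
    funext a
    exact theta_flow_const u θ X hθ htrans hflow hinit a t₀ t
  have hlhs : HasFDerivAt (fun a => θ (X a t₀ t) t)
      ((fderiv ℝ (fun y => θ y t) (X α t₀ t)).comp A) α :=
    by have := ((hθt.differentiable (by norm_num) (X α t₀ t)).hasFDerivAt).comp α hAd; exact this
  have hrhs : HasFDerivAt (fun a => θ a t₀) (fderiv ℝ (fun y => θ y t₀) α) α :=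
    (hθt₀.differentiable (by norm_num) α).hasFDerivAt
  rw [hfun] at hlhs
  have heq := hlhs.unique hrhs
  have hrel : ∀ v : E2, (inner ℝ (gradient (fun y => θ y t) (X α t₀ t)) (A v) : ℝ)
      = inner ℝ (gradient (fun y => θ y t₀) α) v := by
    intro v
    have e1 : (inner ℝ (gradient (fun y => θ y t) (X α t₀ t)) (A v) : ℝ)
        = fderiv ℝ (fun y => θ y t) (X α t₀ t) (A v) := InnerProductSpace.toDual_symm_apply
    have e2 : (inner ℝ (gradient (fun y => θ y t₀) α) v : ℝ)
        = fderiv ℝ (fun y => θ y t₀) α v := InnerProductSpace.toDual_symm_apply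
    rw [e1, e2, ← heq]
    rfl
  have := map_perp_of_rel A (hdet α t₀ t) (gradient (fun y => θ y t₀) α)
    (gradient (fun y => θ y t) (X α t₀ t)) hrel
  rw [perpGrad, perpGrad, ← this]

end transport

/-- Relation between arc-length growth and gradient growth (Lemma 4.4):
`e^{-m(t)l(t)} Ω_l(t)/Ω_l(t₀) ≤ l(t)/l₀ ≤ e^{m(t₀)l₀} Ω_l(t)/Ω_l(t₀)`. -/
theorem arcLength_growth_vs_gradient_growth
    (u : E2 → ℝ → E2) (θ : E2 → ℝ → ℝ) (X : E2 → ℝ → ℝ → E2)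
    (hu : ContDiff ℝ 1 (fun p : E2 × ℝ => u p.1 p.2))
    (hθ : ContDiff ℝ 2 (fun p : E2 × ℝ => θ p.1 p.2))
    -- θ solves the transport equation ∂ₜθ + u·∇θ = 0
    (htrans : ∀ x : E2, ∀ t : ℝ,
      HasDerivAt (fun s => θ x s) (-(fderiv ℝ (fun y => θ y t) x (u x t))) t)
    -- X is the flow map of u
    (hflow : ∀ α : E2, ∀ τ t : ℝ,
      HasDerivAt (fun s => X α τ s) (u (X α τ t) t) t)
    (hinit : ∀ α : E2, ∀ τ : ℝ, X α τ τ = α)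
    -- X is C¹ in α, with Jacobian of determinant 1 (incompressibility)
    (hXC1 : ∀ τ t : ℝ, ContDiff ℝ 1 (fun α => X α τ t))
    (hdet : ∀ α : E2, ∀ τ t : ℝ, (fderiv ℝ (fun a => X a τ t) α).det = 1)
    -- a level-set segment of θ(·,t₀) of arc length l₀, parametrized by arc length
    (t₀ t l₀ : ℝ) (ht : t₀ ≤ t) (hl₀ : 0 < l₀) (γ : ℝ → E2)
    (hγ : ∀ β ∈ Set.Icc (0:ℝ) l₀, HasDerivAt γ (xi θ t₀ (γ β)) β)
    (hnz₀ : ∀ β ∈ Set.Icc (0:ℝ) l₀, perpGrad θ t₀ (γ β) ≠ 0)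
    (hnzt : ∀ β ∈ Set.Icc (0:ℝ) l₀, perpGrad θ t (X (γ β) t₀ t) ≠ 0) :
    Real.exp (-((sSup ((fun β => |divXi θ t (X (γ β) t₀ t)|) '' Set.Icc (0:ℝ) l₀)) *
          (∫ β in (0:ℝ)..l₀, ‖deriv (fun b => X (γ b) t₀ t) β‖))) *
        ((sSup ((fun β => ‖perpGrad θ t (X (γ β) t₀ t)‖) '' Set.Icc (0:ℝ) l₀)) /
          (sSup ((fun β => ‖perpGrad θ t₀ (γ β)‖) '' Set.Icc (0:ℝ) l₀)))
      ≤ (∫ β in (0:ℝ)..l₀, ‖deriv (fun b => X (γ b) t₀ t) β‖) / l₀ ∧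
    (∫ β in (0:ℝ)..l₀, ‖deriv (fun b => X (γ b) t₀ t) β‖) / l₀
      ≤ Real.exp ((sSup ((fun β => |divXi θ t₀ (γ β)|) '' Set.Icc (0:ℝ) l₀)) * l₀) *
        ((sSup ((fun β => ‖perpGrad θ t (X (γ β) t₀ t)‖) '' Set.Icc (0:ℝ) l₀)) /
          (sSup ((fun β => ‖perpGrad θ t₀ (γ β)‖) '' Set.Icc (0:ℝ) l₀))) := by
  have hθt := theta_slice θ hθ t
  have hθt₀ := theta_slice θ hθ t₀
  set K := Set.Icc (0:ℝ) l₀ with hK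
  have hK_cpt : IsCompact K := isCompact_Icc
  have hK_ne : K.Nonempty := Set.nonempty_Icc.mpr hl₀.le
  have h0K : (0:ℝ) ∈ K := Set.left_mem_Icc.mpr hl₀.le
  set Φ : ℝ → ℝ := fun β => ‖perpGrad θ t₀ (γ β)‖ with hΦ_def
  set Ψ : ℝ → ℝ := fun β => ‖perpGrad θ t (X (γ β) t₀ t)‖ with hΨ_def
  set d₀f : ℝ → ℝ := fun β => |divXi θ t₀ (γ β)| with hd₀f_def
  set dtf : ℝ → ℝ := fun β => |divXi θ t (X (γ β) t₀ t)| with hdtf_def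
  set M₀ := sSup (Φ '' K) with hM₀_def
  set Mt := sSup (Ψ '' K) with hMt_def
  set m₀ := sSup (d₀f '' K) with hm₀_def
  set mt := sSup (dtf '' K) with hmt_def
  set L := ∫ β in (0:ℝ)..l₀, ‖deriv (fun b => X (γ b) t₀ t) β‖ with hLdef
  set s : ℝ → E2 := fun b => X (γ b) t₀ t with hs_def
  have hΨs : ∀ β : ℝ, Ψ β = ‖perpGrad θ t (s β)‖ := fun β => rfl
  have hdtfs : ∀ β : ℝ, dtf β = |divXi θ t (s β)| := fun β => rfl
  -- basic continuity
  have hγcont : ContinuousOn γ K := fun β hβ => ((hγ β hβ).continuousAt).continuousWithinAt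
  have hscont : ContinuousOn s K :=
    ((hXC1 t₀ t).continuous.comp_continuousOn hγcont : _)
  have hw₀cont : Continuous (perpGrad θ t₀) := (perpGrad_contDiff θ t₀ hθt₀).continuous
  have hwtcont : Continuous (perpGrad θ t) := (perpGrad_contDiff θ t hθt).continuous
  have hΦcont : ContinuousOn Φ K := (hw₀cont.comp_continuousOn hγcont).norm
  have hΨcont : ContinuousOn Ψ K := (hwtcont.comp_continuousOn hscont).norm
  have hΦpos : ∀ β ∈ K, 0 < Φ β := fun β hβ => norm_pos_iff.mpr (hnz₀ β hβ)
  have hΨpos : ∀ β ∈ K, 0 < Ψ β := fun β hβ => norm_pos_iff.mpr (hnzt β hβ)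
  -- derivative of s
  have hs' : ∀ β ∈ K, HasDerivAt s ((Φ β)⁻¹ • perpGrad θ t (s β)) β := by
    intro β hβ
    have hAd : HasFDerivAt (fun a => X a t₀ t) (fderiv ℝ (fun a => X a t₀ t) (γ β)) (γ β) :=
      (((hXC1 t₀ t).differentiable one_ne_zero) (γ β)).hasFDerivAt
    have hcomp := hAd.comp_hasDerivAt β (hγ β hβ)
    have hval : fderiv ℝ (fun a => X a t₀ t) (γ β) (xi θ t₀ (γ β))
        = (Φ β)⁻¹ • perpGrad θ t (s β) := by
      rw [xi, map_smul,
        ← perpGrad_transport u θ X hθ htrans hflow hinit hXC1 hdet t₀ t (γ β)]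
    rw [hval] at hcomp
    exact hcomp
  have hnormderiv : ∀ β ∈ K, ‖deriv (fun b => X (γ b) t₀ t) β‖ = Ψ β / Φ β := by
    intro β hβ
    rw [show deriv (fun b => X (γ b) t₀ t) β = deriv s β from rfl,
      (hs' β hβ).deriv, norm_smul, norm_inv, norm_norm, hΨs β, div_eq_inv_mul]
  -- integral rewrite
  have hquotcont : ContinuousOn (fun β => Ψ β / Φ β) K :=
    hΨcont.div hΦcont (fun β hβ => (hΦpos β hβ).ne')
  have huIcc : Set.uIcc (0:ℝ) l₀ = K := Set.uIcc_of_le hl₀.le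
  have hL_eq : L = ∫ β in (0:ℝ)..l₀, Ψ β / Φ β := by
    apply intervalIntegral.integral_congr
    intro β hβ
    rw [huIcc] at hβ
    exact hnormderiv β hβ
  have hInt : IntervalIntegrable (fun β => Ψ β / Φ β) MeasureTheory.volume 0 l₀ :=
    (hquotcont.mono (le_of_eq huIcc)).intervalIntegrable
  -- log derivatives
  have hlog₀ : ∀ β ∈ K, HasDerivAt (fun b => Real.log (Φ b)) (-(divXi θ t₀ (γ β))) β := by
    intro β hβ
    have h := hasDerivAt_log_norm_perpGrad θ t₀ hθt₀ γ β (Φ β)⁻¹ (hγ β hβ) (hnz₀ β hβ)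
    rw [inv_mul_cancel₀ (hΦpos β hβ).ne', mul_one] at h
    exact h
  have hlogt : ∀ β ∈ K, HasDerivAt (fun b => Real.log (Ψ b))
      (-(divXi θ t (s β)) * (Ψ β / Φ β)) β := by
    intro β hβ
    have h := hasDerivAt_log_norm_perpGrad θ t hθt s β (Φ β)⁻¹ (hs' β hβ) (hnzt β hβ)
    rw [show (Φ β)⁻¹ * ‖perpGrad θ t (s β)‖ = Ψ β / Φ β by rw [div_eq_inv_mul]] at h
    exact h
  -- continuity of divXi along curves
  have hdiv₀cont : ContinuousOn (fun β => divXi θ t₀ (γ β)) K := by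
    have h1 : ContinuousOn (fun β => fderiv ℝ (perpGrad θ t₀) (γ β)) K :=
      ((perpGrad_contDiff θ t₀ hθt₀).continuous_fderiv one_ne_zero).comp_continuousOn hγcont
    have h2 : ContinuousOn (fun β => perpGrad θ t₀ (γ β)) K :=
      hw₀cont.comp_continuousOn hγcont
    have h3 : ContinuousOn (fun β => -(‖perpGrad θ t₀ (γ β)‖^3)⁻¹ *
        (inner ℝ (fderiv ℝ (perpGrad θ t₀) (γ β) (perpGrad θ t₀ (γ β)))
          (perpGrad θ t₀ (γ β)) : ℝ)) K := by
      apply ContinuousOn.mul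
      · exact (((h2.norm.pow 3).inv₀
          (fun β hβ => by have := hΦpos β hβ; simp only [hΦ_def] at this; exact pow_ne_zero _ this.ne')).neg)
      · exact (h1.clm_apply h2).inner h2
    apply h3.congr
    intro β hβ
    exact divXi_formula θ t₀ hθt₀ (γ β) (hnz₀ β hβ)
  have hdivtcont : ContinuousOn (fun β => divXi θ t (s β)) K := by
    have h1 : ContinuousOn (fun β => fderiv ℝ (perpGrad θ t) (s β)) K :=
      ((perpGrad_contDiff θ t hθt).continuous_fderiv one_ne_zero).comp_continuousOn hscont
    have h2 : ContinuousOn (fun β => perpGrad θ t (s β)) K :=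
      hwtcont.comp_continuousOn hscont
    have h3 : ContinuousOn (fun β => -(‖perpGrad θ t (s β)‖^3)⁻¹ *
        (inner ℝ (fderiv ℝ (perpGrad θ t) (s β) (perpGrad θ t (s β)))
          (perpGrad θ t (s β)) : ℝ)) K := by
      apply ContinuousOn.mul
      · exact (((h2.norm.pow 3).inv₀
          (fun β hβ => by have := hΨpos β hβ; simp only [hΨ_def] at this; exact pow_ne_zero _ this.ne')).neg)
      · exact (h1.clm_apply h2).inner h2
    apply h3.congr
    intro β hβ
    exact divXi_formula θ t hθt (s β) (hnzt β hβ)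
  -- sup facts
  have hΦbdd : BddAbove (Φ '' K) := (hK_cpt.image_of_continuousOn hΦcont).bddAbove
  have hΨbdd : BddAbove (Ψ '' K) := (hK_cpt.image_of_continuousOn hΨcont).bddAbove
  have hd₀cont : ContinuousOn d₀f K := hdiv₀cont.abs
  have hdtcont : ContinuousOn dtf K := hdivtcont.abs
  have hd₀bdd : BddAbove (d₀f '' K) := (hK_cpt.image_of_continuousOn hd₀cont).bddAbove
  have hdtbdd : BddAbove (dtf '' K) := (hK_cpt.image_of_continuousOn hdtcont).bddAbove
  have hΦ_le : ∀ β ∈ K, Φ β ≤ M₀ := fun β hβ => le_csSup hΦbdd ⟨β, hβ, rfl⟩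
  have hΨ_le : ∀ β ∈ K, Ψ β ≤ Mt := fun β hβ => le_csSup hΨbdd ⟨β, hβ, rfl⟩
  have hm₀_ge : ∀ β ∈ K, |divXi θ t₀ (γ β)| ≤ m₀ := fun β hβ => le_csSup hd₀bdd ⟨β, hβ, rfl⟩
  have hmt_ge : ∀ β ∈ K, |divXi θ t (s β)| ≤ mt := fun β hβ => le_csSup hdtbdd ⟨β, hβ, rfl⟩
  have hM₀pos : 0 < M₀ := lt_of_lt_of_le (hΦpos 0 h0K) (hΦ_le 0 h0K)
  have hMtpos : 0 < Mt := lt_of_lt_of_le (hΨpos 0 h0K) (hΨ_le 0 h0K)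
  have hm₀0 : 0 ≤ m₀ := le_trans (abs_nonneg _) (hm₀_ge 0 h0K)
  have hmt0 : 0 ≤ mt := le_trans (abs_nonneg _) (hmt_ge 0 h0K)
  obtain ⟨β₀, hβ₀K, hβ₀max⟩ := hK_cpt.exists_isMaxOn hK_ne hΦcont
  have hM₀_eq : M₀ = Φ β₀ := le_antisymm
    (csSup_le (hK_ne.image Φ) (by rintro y ⟨β, hβ, rfl⟩; exact hβ₀max hβ)) (hΦ_le β₀ hβ₀K)
  obtain ⟨β₁, hβ₁K, hβ₁max⟩ := hK_cpt.exists_isMaxOn hK_ne hΨcont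
  have hMt_eq : Mt = Ψ β₁ := le_antisymm
    (csSup_le (hK_ne.image Ψ) (by rintro y ⟨β, hβ, rfl⟩; exact hβ₁max hβ)) (hΨ_le β₁ hβ₁K)
  -- lower bound for Φ via FTC
  have hlogΦ_bound : ∀ a ∈ K, ∀ b ∈ K, |Real.log (Φ b) - Real.log (Φ a)| ≤ m₀ * l₀ := by
    have key : ∀ a ∈ K, ∀ b ∈ K, a ≤ b → |Real.log (Φ b) - Real.log (Φ a)| ≤ m₀ * l₀ := by
      intro a ha b hb hab
      have hsub : Set.uIcc a b ⊆ K := by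
        rw [Set.uIcc_of_le hab]; exact Set.Icc_subset_Icc ha.1 hb.2
      have hderiv : ∀ x ∈ Set.uIcc a b,
          HasDerivAt (fun b => Real.log (Φ b)) (-(divXi θ t₀ (γ x))) x :=
        fun x hx => hlog₀ x (hsub hx)
      have hcont2 : ContinuousOn (fun x => -(divXi θ t₀ (γ x))) (Set.uIcc a b) :=
        (hdiv₀cont.neg).mono hsub
      have hint : IntervalIntegrable (fun x => -(divXi θ t₀ (γ x)))
          MeasureTheory.volume a b := hcont2.intervalIntegrable
      have hftc := intervalIntegral.integral_eq_sub_of_hasDerivAt hderiv hint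
      rw [← hftc]
      have hIccsub : Set.Icc a b ⊆ K := Set.Icc_subset_Icc ha.1 hb.2
      calc |∫ x in a..b, -(divXi θ t₀ (γ x))|
          ≤ ∫ x in a..b, |(-(divXi θ t₀ (γ x)))| :=
            intervalIntegral.abs_integral_le_integral_abs hab
        _ ≤ ∫ _x in a..b, m₀ := by
            apply intervalIntegral.integral_mono_on hab hint.abs intervalIntegrable_const
            intro x hx
            rw [abs_neg]
            exact hm₀_ge x (hIccsub hx)
        _ = (b - a) * m₀ := by rw [intervalIntegral.integral_const]; rw [smul_eq_mul]
        _ ≤ m₀ * l₀ := by nlinarith [ha.1, hb.2, hm₀0, ha.2, hb.1]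
    intro a ha b hb
    rcases le_total a b with h | h
    · exact key a ha b hb h
    · rw [abs_sub_comm]; exact key b hb a ha h
  have hΦ_lb : ∀ β ∈ K, M₀ * Real.exp (-(m₀ * l₀)) ≤ Φ β := by
    intro β hβ
    have h := abs_le.mp (hlogΦ_bound β hβ β₀ hβ₀K)
    have h2 : Real.log (Φ β₀) + -(m₀ * l₀) ≤ Real.log (Φ β) := by linarith [h.1, h.2]
    have h3 := Real.exp_le_exp.mpr h2
    rw [Real.exp_add, Real.exp_log (hΦpos β₀ hβ₀K), Real.exp_log (hΦpos β hβ)] at h3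
    rw [hM₀_eq]
    exact h3
  -- interval integrability of the quotient on subintervals
  have hl₀K : l₀ ∈ K := Set.right_mem_Icc.mpr hl₀.le
  have hIntOn : ∀ a ∈ K, ∀ b ∈ K,
      IntervalIntegrable (fun β => Ψ β / Φ β) MeasureTheory.volume a b := by
    intro a ha b hb
    apply (hquotcont.mono _).intervalIntegrable
    rcases le_total a b with h | h
    · rw [Set.uIcc_of_le h]; exact Set.Icc_subset_Icc ha.1 hb.2
    · rw [Set.uIcc_of_ge h]; exact Set.Icc_subset_Icc hb.1 ha.2
  have hqnonneg : ∀ x ∈ K, 0 ≤ Ψ x / Φ x :=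
    fun x hx => le_of_lt (div_pos (hΨpos x hx) (hΦpos x hx))
  have hmono_int : ∀ a ∈ K, ∀ b ∈ K, a ≤ b →
      (∫ x in a..b, Ψ x / Φ x) ≤ ∫ x in (0:ℝ)..l₀, Ψ x / Φ x := by
    intro a ha b hb hab
    have e1 := intervalIntegral.integral_add_adjacent_intervals
      (hIntOn 0 h0K a ha) (hIntOn a ha b hb)
    have e2 := intervalIntegral.integral_add_adjacent_intervals
      (hIntOn 0 h0K b hb) (hIntOn b hb l₀ hl₀K)
    have h2 : 0 ≤ ∫ x in (0:ℝ)..a, Ψ x / Φ x :=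
      intervalIntegral.integral_nonneg ha.1
        (fun x hx => hqnonneg x ⟨hx.1, le_trans hx.2 ha.2⟩)
    have h3 : 0 ≤ ∫ x in b..l₀, Ψ x / Φ x :=
      intervalIntegral.integral_nonneg hb.2
        (fun x hx => hqnonneg x ⟨le_trans hb.1 hx.1, hx.2⟩)
    linarith [e1, e2, h2, h3]
  -- lower bound for Ψ via FTC
  have hlogΨ_bound : ∀ a ∈ K, ∀ b ∈ K, |Real.log (Ψ b) - Real.log (Ψ a)| ≤ mt * L := by
    have hLpos : L = ∫ x in (0:ℝ)..l₀, Ψ x / Φ x := hL_eq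
    have key : ∀ a ∈ K, ∀ b ∈ K, a ≤ b → |Real.log (Ψ b) - Real.log (Ψ a)| ≤ mt * L := by
      intro a ha b hb hab
      have hsub : Set.uIcc a b ⊆ K := by
        rw [Set.uIcc_of_le hab]; exact Set.Icc_subset_Icc ha.1 hb.2
      have hIccsub : Set.Icc a b ⊆ K := Set.Icc_subset_Icc ha.1 hb.2
      have hderiv : ∀ x ∈ Set.uIcc a b, HasDerivAt (fun b => Real.log (Ψ b))
          (-(divXi θ t (s x)) * (Ψ x / Φ x)) x :=
        fun x hx => hlogt x (hsub hx)
      have hcont2 : ContinuousOn (fun x => -(divXi θ t (s x)) * (Ψ x / Φ x)) (Set.uIcc a b) :=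
        ((hdivtcont.neg).mul hquotcont).mono hsub
      have hint : IntervalIntegrable (fun x => -(divXi θ t (s x)) * (Ψ x / Φ x))
          MeasureTheory.volume a b := hcont2.intervalIntegrable
      have hftc := intervalIntegral.integral_eq_sub_of_hasDerivAt hderiv hint
      rw [← hftc]
      have hintq := hIntOn a ha b hb
      calc |∫ x in a..b, -(divXi θ t (s x)) * (Ψ x / Φ x)|
          ≤ ∫ x in a..b, |(-(divXi θ t (s x)) * (Ψ x / Φ x))| :=
            intervalIntegral.abs_integral_le_integral_abs hab
        _ ≤ ∫ x in a..b, mt * (Ψ x / Φ x) := by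
            apply intervalIntegral.integral_mono_on hab hint.abs
              (hintq.const_mul mt)
            intro x hx
            rw [abs_mul, abs_neg, abs_of_nonneg (hqnonneg x (hIccsub hx))]
            exact mul_le_mul_of_nonneg_right (hmt_ge x (hIccsub hx)) (hqnonneg x (hIccsub hx))
        _ = mt * ∫ x in a..b, Ψ x / Φ x := intervalIntegral.integral_const_mul mt _
        _ ≤ mt * ∫ x in (0:ℝ)..l₀, Ψ x / Φ x :=
            mul_le_mul_of_nonneg_left (hmono_int a ha b hb hab) hmt0
        _ = mt * L := by rw [← hLpos]
    intro a ha b hb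
    rcases le_total a b with h | h
    · exact key a ha b hb h
    · rw [abs_sub_comm]; exact key b hb a ha h
  have hΨ_lb : ∀ β ∈ K, Mt * Real.exp (-(mt * L)) ≤ Ψ β := by
    intro β hβ
    have h := abs_le.mp (hlogΨ_bound β hβ β₁ hβ₁K)
    have h2 : Real.log (Ψ β₁) + -(mt * L) ≤ Real.log (Ψ β) := by linarith [h.1, h.2]
    have h3 := Real.exp_le_exp.mpr h2
    rw [Real.exp_add, Real.exp_log (hΨpos β₁ hβ₁K), Real.exp_log (hΨpos β hβ)] at h3
    rw [hMt_eq]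
    exact h3
  -- final integral bounds
  have hLle : L ≤ l₀ * (Mt / (M₀ * Real.exp (-(m₀ * l₀)))) := by
    rw [hL_eq]
    have hden : 0 < M₀ * Real.exp (-(m₀ * l₀)) := by positivity
    calc (∫ x in (0:ℝ)..l₀, Ψ x / Φ x)
        ≤ ∫ _x in (0:ℝ)..l₀, Mt / (M₀ * Real.exp (-(m₀ * l₀))) := by
          apply intervalIntegral.integral_mono_on hl₀.le hInt intervalIntegrable_const
          intro x hx
          exact div_le_div₀ hMtpos.le (hΨ_le x hx) hden (hΦ_lb x hx)
      _ = l₀ * (Mt / (M₀ * Real.exp (-(m₀ * l₀)))) := by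
          rw [intervalIntegral.integral_const, smul_eq_mul, sub_zero]
  have hLge : l₀ * (Mt * Real.exp (-(mt * L)) / M₀) ≤ L := by
    conv_rhs => rw [hL_eq]
    calc l₀ * (Mt * Real.exp (-(mt * L)) / M₀)
        = ∫ _x in (0:ℝ)..l₀, Mt * Real.exp (-(mt * L)) / M₀ := by
          rw [intervalIntegral.integral_const, smul_eq_mul, sub_zero]
      _ ≤ ∫ x in (0:ℝ)..l₀, Ψ x / Φ x := by
          apply intervalIntegral.integral_mono_on hl₀.le intervalIntegrable_const hInt
          intro x hx
          exact div_le_div₀ (hΨpos x hx).le (hΨ_lb x hx) (hΦpos x hx) (hΦ_le x hx)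
  constructor
  · have h1 : Real.exp (-(mt * L)) * (Mt / M₀) = Mt * Real.exp (-(mt * L)) / M₀ := by ring
    rw [h1, le_div_iff₀ hl₀]
    linarith [hLge]
  · rw [div_le_iff₀ hl₀]
    have h2 : Real.exp (m₀ * l₀) * (Mt / M₀) = Mt / (M₀ * Real.exp (-(m₀ * l₀))) := by
      rw [Real.exp_neg]
      field_simp
    rw [h2]
    linarith [hLle]
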